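/- Let Ω = {x ∈ ℝⁿ : ∑ᵢ |xᵢ|^p ≤ r} with p ∈ (0,1), r > 0, and let x̄ ∈ Ω satisfy ‖x̄‖_p^p = r. Then any vector η ∈ ℝⁿ with ηᵢ = p|x̄ᵢ|^(p-1) sgn(x̄ᵢ) for all i in the support of x̄ (and ηᵢ arbitrary for i with x̄ᵢ = 0) belongs to the Fréchet normal cone N_Ω(x̄). -/

import Mathlib

open Finset

/-- The Fréchet normal cone of a set `X` at a point `x₀`:
all `η` with `limsup_{x → x₀, x ∈ X} ⟪η, x - x₀⟫ / ‖x - x₀‖ ≤ 0`. -/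
def frechetNormalCone {n : ℕ} (X : Set (EuclideanSpace ℝ (Fin n)))
    (x₀ : EuclideanSpace ℝ (Fin n)) : Set (EuclideanSpace ℝ (Fin n)) :=
  {η | ∀ ε > 0, ∃ δ > 0, ∀ x ∈ X, ‖x - x₀‖ < δ →
      (inner ℝ η (x - x₀) : ℝ) ≤ ε * ‖x - x₀‖}

/-- Bernoulli's inequality for exponents in `[-1, 0]`. -/
lemma bernoulli_neg_aux {t q : ℝ} (ht : 0 < t) (hq0 : -1 ≤ q) (hq1 : q ≤ 0) :
    1 + q * (t - 1) ≤ t ^ q := by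
  have hs : (-1 : ℝ) ≤ t - 1 := by linarith
  have h := rpow_one_add_le_one_add_mul_self hs (p := -q) (by linarith) (by linarith)
  rw [show (1 : ℝ) + (t - 1) = t by ring] at h
  have hA : (0 : ℝ) < t ^ q := Real.rpow_pos_of_pos ht _
  have hneg : t ^ (-q) = (t ^ q)⁻¹ := by rw [Real.rpow_neg ht.le]
  rw [hneg] at h
  have h1 : (0 : ℝ) < 1 + -q * (t - 1) := lt_of_lt_of_le (by positivity) h
  have h2 : 1 ≤ (t ^ q) * (1 + -q * (t - 1)) :=
    calc (1:ℝ) = t ^ q * (t ^ q)⁻¹ := (mul_inv_cancel₀ hA.ne').symm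
      _ ≤ t ^ q * (1 + -q * (t - 1)) := mul_le_mul_of_nonneg_left h hA.le
  nlinarith [sq_nonneg (q * (t - 1)), hA]

/-- Key one-dimensional estimate: tangent line bound with quadratic error. -/
lemma key_rpow_ineq {p A B : ℝ} (hp0 : 0 < p) (hp1 : p < 1) (hA : 0 < A) (hB : 0 < B) :
    p * A ^ (p - 1) * (B - A) ≤ B ^ p - A ^ p + (1 - p) * A ^ (p - 2) * (B - A) ^ 2 := by
  set v := A ^ (p - 2) with hv_def
  set w := B ^ (p - 1) with hw_def
  have hv : 0 < v := Real.rpow_pos_of_pos hA _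
  have hw : 0 < w := Real.rpow_pos_of_pos hB _
  have huv : A ^ (p - 1) = v * A := by
    rw [hv_def, show p - 1 = (p - 2) + 1 by ring, Real.rpow_add_one hA.ne']
  have hAp : A ^ p = v * A * A := by
    rw [show p = (p - 1) + 1 by ring, Real.rpow_add_one hA.ne', huv]
  have hBp : B ^ p = w * B := by
    rw [show p = (p - 1) + 1 by ring, Real.rpow_add_one hB.ne', ← hw_def]
  have htq : (0 : ℝ) < B / A := div_pos hB hA
  have hb := bernoulli_neg_aux htq (q := p - 1) (by linarith) (by linarith)
  have e1 : (B / A) ^ (p - 1) = w / (v * A) := by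
    rw [Real.div_rpow hB.le hA.le, huv]
  rw [e1] at hb
  have h3 := mul_le_mul_of_nonneg_right hb (show (0:ℝ) ≤ v * A * B by positivity)
  have e2 : (1 + (p - 1) * (B / A - 1)) * (v * A * B)
      = v * A * B + (p - 1) * (v * B * (B - A)) := by
    field_simp
  have e3 : w / (v * A) * (v * A * B) = w * B := by
    field_simp
  rw [e2, e3] at h3
  rw [huv, hAp, hBp]
  nlinarith [h3]

/-- Coordinatewise bound in Euclidean space. -/
lemma abs_coord_le_norm {n : ℕ} (v : EuclideanSpace ℝ (Fin n)) (i : Fin n) :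
    |v i| ≤ ‖v‖ := by
  rw [EuclideanSpace.norm_eq]
  rw [show |v i| = Real.sqrt ((v i) ^ 2) from (Real.sqrt_sq_eq_abs _).symm]
  apply Real.sqrt_le_sqrt
  calc (v i) ^ 2 = ‖v i‖ ^ 2 := by rw [Real.norm_eq_abs, sq_abs]
    _ ≤ ∑ j, ‖v j‖ ^ 2 :=
      Finset.single_le_sum (f := fun j => ‖v j‖ ^ 2) (fun j _ => sq_nonneg _) (mem_univ i)

lemma norm_sq_eq_sum {n : ℕ} (v : EuclideanSpace ℝ (Fin n)) :
    ‖v‖ ^ 2 = ∑ i, (v i) ^ 2 := by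
  rw [EuclideanSpace.norm_eq, Real.sq_sqrt (by positivity)]
  congr 1; ext j; rw [Real.norm_eq_abs, sq_abs]

/-- Signed version of the key estimate. -/
lemma key_signed {p a b : ℝ} (hp0 : 0 < p) (hp1 : p < 1) (ha : a ≠ 0)
    (hab : |b - a| < |a|) :
    p * |a| ^ (p - 1) * Real.sign a * (b - a)
      ≤ |b| ^ p - |a| ^ p + (1 - p) * |a| ^ (p - 2) * (b - a) ^ 2 := by
  rcases ha.lt_or_gt with hneg | hpos
  · have hb : b < 0 := by
      rcases abs_lt.mp hab with ⟨h1, h2⟩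
      rcases abs_cases a with ⟨e, _⟩ | ⟨e, _⟩ <;> linarith
    have hs : Real.sign a = -1 := Real.sign_of_neg hneg
    have h := key_rpow_ineq hp0 hp1 (A := -a) (B := -b) (by linarith) (by linarith)
    rw [abs_of_neg hneg, abs_of_neg hb, hs]
    calc p * (-a) ^ (p - 1) * (-1) * (b - a)
        = p * (-a) ^ (p - 1) * (-b - -a) := by ring
      _ ≤ (-b) ^ p - (-a) ^ p + (1 - p) * (-a) ^ (p - 2) * (-b - -a) ^ 2 := h
      _ = (-b) ^ p - (-a) ^ p + (1 - p) * (-a) ^ (p - 2) * (b - a) ^ 2 := by ring_nf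
  · have hb : 0 < b := by
      rcases abs_lt.mp hab with ⟨h1, h2⟩
      rcases abs_cases a with ⟨e, _⟩ | ⟨e, _⟩ <;> linarith
    have hs : Real.sign a = 1 := Real.sign_of_pos hpos
    have h := key_rpow_ineq hp0 hp1 (A := a) (B := b) hpos hb
    rw [abs_of_pos hpos, abs_of_pos hb, hs]
    linarith

theorem frechet_normal_cone_boundary_lp_ball (n : ℕ) (p r : ℝ)
    (hp0 : 0 < p) (hp1 : p < 1) (hr : 0 < r)
    (xbar : EuclideanSpace ℝ (Fin n)) (hxbar : ∑ i, |xbar i| ^ p = r)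
    (η : EuclideanSpace ℝ (Fin n))
    (hη : ∀ i, xbar i ≠ 0 → η i = p * |xbar i| ^ (p - 1) * Real.sign (xbar i)) :
    η ∈ frechetNormalCone {x : EuclideanSpace ℝ (Fin n) | ∑ i, |x i| ^ p ≤ r} xbar := by
  -- some coordinate of xbar is nonzero
  obtain ⟨i₀, hi₀⟩ : ∃ i, xbar i ≠ 0 := by
    by_contra h
    push_neg at h
    simp only [h, abs_zero, Real.zero_rpow hp0.ne', Finset.sum_const_zero] at hxbar
    linarith
  have hne : (Finset.univ : Finset (Fin n)).Nonempty := ⟨i₀, mem_univ i₀⟩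
  set δ₁ : ℝ := univ.inf' hne (fun i => if xbar i = 0 then 1 else |xbar i|) with hδ₁def
  have hδ₁pos : 0 < δ₁ := by
    rw [hδ₁def, Finset.lt_inf'_iff]
    intro i _
    split_ifs with h
    · norm_num
    · exact abs_pos.mpr h
  have hδ₁le : ∀ i, xbar i ≠ 0 → δ₁ ≤ |xbar i| := by
    intro i hi
    have h := Finset.inf'_le (fun j => if xbar j = 0 then 1 else |xbar j|) (mem_univ i)
    rw [hδ₁def]
    simpa only [hi, if_false] using h
  set M : ℝ := univ.sup' hne (fun i => |η i|) with hMdef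
  have hM : ∀ i, |η i| ≤ M := by
    intro i
    rw [hMdef]
    exact Finset.le_sup' (fun j => |η j|) (mem_univ i)
  have hM1 : (0 : ℝ) < M + 1 := by
    have := (abs_nonneg (η i₀)).trans (hM i₀); linarith
  set δ₂ : ℝ := (M + 1) ^ ((p - 1)⁻¹) with hδ₂def
  have hδ₂pos : 0 < δ₂ := Real.rpow_pos_of_pos hM1 _
  have hp1' : p - 1 ≠ 0 := by intro h; apply absurd hp1; push_neg; linarith [sub_eq_zero.mp h]
  have hδ₂pow : δ₂ ^ (p - 1) = M + 1 := by
    rw [hδ₂def, ← Real.rpow_mul hM1.le, inv_mul_cancel₀ hp1', Real.rpow_one]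
  set C : ℝ := (1 - p) * δ₁ ^ (p - 2) with hCdef
  have hC : 0 < C := by
    apply mul_pos (by linarith)
    exact Real.rpow_pos_of_pos hδ₁pos _
  intro ε hε
  refine ⟨min (min δ₁ δ₂) (ε / C), lt_min (lt_min hδ₁pos hδ₂pos) (div_pos hε hC), ?_⟩
  intro x hx hxδ
  simp only [Set.mem_setOf_eq] at hx
  set d : EuclideanSpace ℝ (Fin n) := x - xbar with hddef
  have hd_apply : ∀ i, d i = x i - xbar i := fun i => rfl
  have hdnorm : ∀ i, |x i - xbar i| ≤ ‖d‖ := by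
    intro i; rw [← hd_apply]; exact abs_coord_le_norm d i
  have hδ1 : ‖d‖ < δ₁ := lt_of_lt_of_le hxδ ((min_le_left _ _).trans (min_le_left _ _))
  have hδ2 : ‖d‖ < δ₂ := lt_of_lt_of_le hxδ ((min_le_left _ _).trans (min_le_right _ _))
  have hδ3 : ‖d‖ ≤ ε / C := le_of_lt (lt_of_lt_of_le hxδ (min_le_right _ _))
  -- coordinatewise bound
  have hcoord : ∀ i, η i * (x i - xbar i)
      ≤ |x i| ^ p - |xbar i| ^ p + C * (x i - xbar i) ^ 2 := by
    intro i
    by_cases hi : xbar i = 0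
    · -- off the support
      rw [hi, abs_zero, Real.zero_rpow hp0.ne', sub_zero, sub_zero]
      have h2 : η i * x i ≤ |x i| ^ p := by
        by_cases hxi : x i = 0
        · simp [hxi, Real.zero_rpow hp0.ne']
        · have habs : 0 < |x i| := abs_pos.mpr hxi
          have hlt : |x i| < δ₂ := by
            have := hdnorm i; rw [hi, sub_zero] at this; linarith
          have hkey : δ₂ ^ (p - 1) < |x i| ^ (p - 1) :=
            Real.rpow_lt_rpow_of_neg habs hlt (by linarith)
          have hrp : |x i| ^ p = |x i| ^ (p - 1) * |x i| := by
            rw [← Real.rpow_add_one (abs_ne_zero.mpr hxi) (p - 1)]; norm_num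
          calc η i * x i ≤ |η i| * |x i| := by
                rw [← abs_mul]; exact le_abs_self _
            _ ≤ (M + 1) * |x i| := by
                apply mul_le_mul_of_nonneg_right _ habs.le
                linarith [hM i]
            _ ≤ |x i| ^ (p - 1) * |x i| := by
                apply mul_le_mul_of_nonneg_right _ habs.le
                rw [← hδ₂pow]; exact hkey.le
            _ = |x i| ^ p := hrp.symm
      nlinarith [sq_nonneg (x i - xbar i), hC, h2]
    · -- on the support
      have hab : |x i - xbar i| < |xbar i| :=
        lt_of_le_of_lt (hdnorm i) (lt_of_lt_of_le hδ1 (hδ₁le i hi))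
      have h := key_signed hp0 hp1 hi hab (b := x i)
      rw [hη i hi]
      have hpow : |xbar i| ^ (p - 2) ≤ δ₁ ^ (p - 2) :=
        Real.rpow_le_rpow_of_nonpos hδ₁pos (hδ₁le i hi) (by linarith)
      have : (1 - p) * |xbar i| ^ (p - 2) * (x i - xbar i) ^ 2
          ≤ C * (x i - xbar i) ^ 2 := by
        rw [hCdef]
        apply mul_le_mul_of_nonneg_right _ (sq_nonneg _)
        apply mul_le_mul_of_nonneg_left hpow (by linarith)
      linarith
  -- sum everything
  have hinner : (inner ℝ η d : ℝ) = ∑ i, η i * (x i - xbar i) := by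
    simp only [PiLp.inner_apply, RCLike.inner_apply, conj_trivial]
    exact Finset.sum_congr rfl fun i _ => by rw [hd_apply, mul_comm]
  have hsum : (inner ℝ η d : ℝ) ≤ C * ‖d‖ ^ 2 := by
    rw [hinner]
    calc ∑ i, η i * (x i - xbar i)
        ≤ ∑ i, (|x i| ^ p - |xbar i| ^ p + C * (x i - xbar i) ^ 2) :=
          Finset.sum_le_sum fun i _ => hcoord i
      _ = (∑ i, |x i| ^ p) - (∑ i, |xbar i| ^ p) + C * ∑ i, (x i - xbar i) ^ 2 := by
          rw [Finset.sum_add_distrib, Finset.sum_sub_distrib, ← Finset.mul_sum]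
      _ ≤ C * ∑ i, (x i - xbar i) ^ 2 := by
          rw [hxbar]; linarith
      _ = C * ‖d‖ ^ 2 := by
          rw [norm_sq_eq_sum d]
          refine congrArg (C * ·) (Finset.sum_congr rfl fun i _ => ?_)
          rw [hd_apply i]
  calc (inner ℝ η (x - xbar) : ℝ) = (inner ℝ η d : ℝ) := rfl
    _ ≤ C * ‖d‖ ^ 2 := hsum
    _ = (C * ‖d‖) * ‖d‖ := by ring
    _ ≤ ε * ‖d‖ := by
        apply mul_le_mul_of_nonneg_right _ (norm_nonneg d)
        calc C * ‖d‖ ≤ C * (ε / C) := mul_le_mul_of_nonneg_left hδ3 hC.le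
          _ = ε := by field_simp
    _ = ε * ‖x - xbar‖ := rfl
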